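/- arXiv:1011.4404 — 2 statements merged into one kernel-verified Lean document; each statement's English description precedes it below -/
import Mathlib

section
/- Let r_n = (w - c + 2^(n-1))/w with w > 0 and w - c + 1 > 0 and c > 1. Then the weighted geometric mean ∏_{n=1}^∞ r_n^{(1/2)^n} converges to a finite positive number, while the weighted arithmetic mean ∑_{n=1}^∞ (1/2)^n r_n diverges. -/
open Filter

/-- Non-ergodicity of the St. Petersburg lottery: for r_n = (w - c + 2^(n-1))/w with
w > 0, w - c + 1 > 0 and c > 1, the weighted geometric mean ∏ r_n^{(1/2)^n} converges
to a finite positive number while the weighted arithmetic mean ∑ (1/2)^n r_n diverges. -/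
theorem st_petersburg_non_ergodic (w c : ℝ) (hw : 0 < w) (hwc : 0 < w - c + 1)
    (hc : 1 < c) :
    (∃ P : ℝ, 0 < P ∧
      Tendsto (fun T : ℕ => ∏ n ∈ Finset.range T,
          ((w - c + 2^n) / w) ^ ((1/2 : ℝ)^(n+1))) atTop (nhds P)) ∧
    Tendsto (fun N : ℕ => ∑ n ∈ Finset.range N, (1/2 : ℝ)^(n+1) * ((w - c + 2^n) / w))
      atTop atTop := by
  have h2 : ∀ n : ℕ, (1:ℝ) ≤ 2 ^ n := fun n => one_le_pow₀ one_le_two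
  have hnum : ∀ n : ℕ, 0 < w - c + 2 ^ n := fun n => by linarith [h2 n]
  have hrpos : ∀ n : ℕ, 0 < (w - c + 2 ^ n) / w := fun n => div_pos (hnum n) hw
  constructor
  · -- geometric mean converges
    set A : ℝ := |Real.log (w+1)| + |Real.log (w-c+1)| + |Real.log w| with hA
    have hA0 : 0 ≤ A := by positivity
    have hlog2 : (0:ℝ) ≤ Real.log 2 := Real.log_nonneg one_le_two
    have hbound : ∀ n : ℕ, |Real.log ((w - c + 2 ^ n) / w)| ≤ A + n * Real.log 2 := by
      intro n
      have hlogdiv : Real.log ((w - c + 2 ^ n) / w)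
          = Real.log (w - c + 2 ^ n) - Real.log w :=
        Real.log_div (ne_of_gt (hnum n)) (ne_of_gt hw)
      have hub : Real.log (w - c + 2 ^ n) ≤ Real.log (w+1) + n * Real.log 2 := by
        have h1 : w - c + 2 ^ n ≤ (w+1) * 2 ^ n := by
          have := h2 n
          nlinarith
        calc Real.log (w - c + 2 ^ n) ≤ Real.log ((w+1) * 2 ^ n) :=
              Real.log_le_log (hnum n) h1
          _ = Real.log (w+1) + n * Real.log 2 := by
              rw [Real.log_mul (by positivity) (by positivity), Real.log_pow]
      have hlb : Real.log (w-c+1) ≤ Real.log (w - c + 2 ^ n) :=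
        Real.log_le_log hwc (by linarith [h2 n])
      rw [hlogdiv]
      have h3 : |Real.log (w - c + 2 ^ n)| ≤ |Real.log (w+1)| + |Real.log (w-c+1)| + n * Real.log 2 := by
        rw [abs_le]
        constructor
        · have := neg_abs_le (Real.log (w-c+1))
          have hn : (0:ℝ) ≤ (n:ℝ) * Real.log 2 := by positivity
          have := abs_nonneg (Real.log (w+1))
          linarith
        · have := le_abs_self (Real.log (w+1))
          have := abs_nonneg (Real.log (w-c+1))
          linarith
      calc |Real.log (w - c + 2 ^ n) - Real.log w|
          ≤ |Real.log (w - c + 2 ^ n)| + |Real.log w| := abs_sub _ _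
        _ ≤ A + n * Real.log 2 := by rw [hA]; linarith
    have hsum : Summable (fun n : ℕ => Real.log ((w - c + 2 ^ n) / w) * (1/2:ℝ)^(n+1)) := by
      apply Summable.of_norm_bounded
        (g := fun n : ℕ => (A + n * Real.log 2) * (1/2:ℝ)^(n+1))
      · have hgeom : Summable (fun n : ℕ => (1/2:ℝ)^n) :=
          summable_geometric_of_lt_one (by norm_num) (by norm_num)
        have hs1 : Summable (fun n : ℕ => A * (1/2:ℝ)^(n+1)) :=
          (hgeom.mul_left (A * (1/2))).congr (fun n => by rw [pow_succ]; ring)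
        have hs2 : Summable (fun n : ℕ => (n : ℝ) * (1/2:ℝ)^(n+1)) := by
          have h := summable_pow_mul_geometric_of_norm_lt_one (R := ℝ) 1
            (r := (1/2:ℝ)) (by rw [Real.norm_eq_abs, abs_of_pos (by norm_num : (0:ℝ) < 1/2)]; norm_num)
          exact (h.mul_right (1/2)).congr (fun n => by rw [pow_one, pow_succ]; ring)
        exact (hs1.add (hs2.mul_left (Real.log 2))).congr (fun n => by ring)
      · intro n
        rw [norm_mul, Real.norm_eq_abs, Real.norm_eq_abs]
        have hp : |(1/2:ℝ)^(n+1)| = (1/2:ℝ)^(n+1) := abs_of_pos (by positivity)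
        rw [hp]
        exact mul_le_mul_of_nonneg_right (hbound n) (by positivity)
    refine ⟨Real.exp (∑' n, Real.log ((w - c + 2 ^ n) / w) * (1/2:ℝ)^(n+1)),
      Real.exp_pos _, ?_⟩
    have hprod : ∀ T : ℕ, ∏ n ∈ Finset.range T, ((w - c + 2^n) / w) ^ ((1/2 : ℝ)^(n+1))
        = Real.exp (∑ n ∈ Finset.range T, Real.log ((w - c + 2 ^ n) / w) * (1/2:ℝ)^(n+1)) := by
      intro T
      rw [Real.exp_sum]
      exact Finset.prod_congr rfl fun n _ => Real.rpow_def_of_pos (hrpos n) _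
    simp only [hprod]
    exact (Real.continuous_exp.continuousAt.tendsto).comp hsum.hasSum.tendsto_sum_nat
  · -- arithmetic mean diverges
    have hgeo : ∀ N : ℕ, ∑ n ∈ Finset.range N, (1/2:ℝ)^(n+1) ≤ 1 := by
      intro N
      have : ∑ n ∈ Finset.range N, (1/2:ℝ)^(n+1) = 1 - (1/2:ℝ)^N := by
        induction N with
        | zero => simp
        | succ k ih => rw [Finset.sum_range_succ, ih]; ring
      rw [this]
      have : (0:ℝ) ≤ (1/2:ℝ)^N := by positivity
      linarith
    have hlower : ∀ N : ℕ, (N : ℝ) * (1/(2*w)) - 1/w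
        ≤ ∑ n ∈ Finset.range N, (1/2 : ℝ)^(n+1) * ((w - c + 2^n) / w) := by
      intro N
      have hsplit : ∀ n : ℕ, (1/2 : ℝ)^(n+1) * ((w - c + 2^n) / w)
          = (1/2:ℝ)^(n+1) * ((w - c)/w) + 1/(2*w) := by
        intro n
        have h2n : (1/2:ℝ)^n * 2^n = 1 := by
          rw [← mul_pow]; norm_num
        linear_combination (1 / (2 * w)) * h2n
      calc (N : ℝ) * (1/(2*w)) - 1/w
          ≤ ∑ n ∈ Finset.range N, (1/2:ℝ)^(n+1) * ((w - c)/w) + (N:ℝ) * (1/(2*w)) := by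
            have hterm : ∀ n ∈ Finset.range N, -((1/w) * (1/2:ℝ)^(n+1)) ≤ (1/2:ℝ)^(n+1) * ((w - c)/w) := by
              intro n _
              have h1 : -(1/w) ≤ (w-c)/w := by
                rw [← neg_div]
                exact (div_le_div_iff_of_pos_right hw).mpr (by linarith)
              have hp : (0:ℝ) < (1/2:ℝ)^(n+1) := by positivity
              have := mul_le_mul_of_nonneg_left h1 hp.le
              linarith
            have hsum1 : -(1/w) ≤ ∑ n ∈ Finset.range N, (1/2:ℝ)^(n+1) * ((w - c)/w) := by
              calc -(1/w) ≤ -((1/w) * ∑ n ∈ Finset.range N, (1/2:ℝ)^(n+1)) := by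
                    have := hgeo N
                    have hw1 : 0 < 1/w := by positivity
                    nlinarith
                _ = ∑ n ∈ Finset.range N, -((1/w) * (1/2:ℝ)^(n+1)) := by
                    rw [Finset.mul_sum, ← Finset.sum_neg_distrib]
                _ ≤ _ := Finset.sum_le_sum hterm
            linarith
        _ = ∑ n ∈ Finset.range N, ((1/2:ℝ)^(n+1) * ((w - c)/w) + 1/(2*w)) := by
            rw [Finset.sum_add_distrib, Finset.sum_const, Finset.card_range]
            ring
        _ = _ := by
            exact (Finset.sum_congr rfl fun n _ => (hsplit n).symm)
    apply tendsto_atTop_mono hlower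
    apply tendsto_atTop_add_const_right
    exact Tendsto.atTop_mul_const (by positivity) tendsto_natCast_atTop_atTop
end

section
/- Fix w > 0. Define g(c) = ∑_{n=1}^∞ (1/2)^n ln((w - c + 2^(n-1))/w) for c ∈ (1, w+1). Then g is continuous and strictly decreasing on (1, w+1), g(c) > 0 for c near 1, and g(c) → -∞ as c → (w+1)^-; hence there exists a unique c* ∈ (1, w+1) with g(c*) = 0. -/
set_option maxHeartbeats 1000000


open Filter

section StPetersburgAux

lemma stp_abs_log_le {t : ℝ} (ht : 0 < t) :
    |Real.log t| ≤ 2 * Real.sqrt t + 2 / t := by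
  have hst : 0 < Real.sqrt t := Real.sqrt_pos.2 ht
  have h2t : 0 < 2 / t := by positivity
  rw [abs_le]
  constructor
  · rcases le_or_gt 1 t with h | h
    · have hlog : 0 ≤ Real.log t := Real.log_nonneg h
      nlinarith [Real.sqrt_nonneg t]
    · have h1 : Real.log t⁻¹ ≤ t⁻¹ - 1 := Real.log_le_sub_one_of_pos (by positivity)
      rw [Real.log_inv] at h1
      have h2 : t⁻¹ ≤ 2 / t := by
        rw [div_eq_mul_inv]
        nlinarith [inv_pos.2 ht]
      nlinarith [Real.sqrt_nonneg t]
  · have h1 : Real.log (Real.sqrt t) ≤ Real.sqrt t - 1 :=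
      Real.log_le_sub_one_of_pos hst
    rw [Real.log_sqrt ht.le] at h1
    linarith

lemma stp_sqrt_two_pow (n : ℕ) : Real.sqrt ((2:ℝ)^n) = (Real.sqrt 2)^n := by
  induction n with
  | zero => simp
  | succ n ih => rw [pow_succ, pow_succ, Real.sqrt_mul (by positivity), ih]

/-- Master summability lemma. -/
lemma stp_summable_master (w : ℝ) (hw : 0 < w) {ε : ℝ} (hε : 0 < ε) (x : ℕ → ℝ)
    (h1 : ∀ n, ε ≤ x n) (h2 : ∀ n, x n ≤ (w + 2) * 2 ^ n) :
    Summable (fun n => (1/2:ℝ)^(n+1) * |Real.log (x n / w)|) := by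
  have hx : ∀ n, 0 < x n := fun n => hε.trans_le (h1 n)
  have hs2 : Real.sqrt 2 < 2 := by
    nlinarith [Real.sq_sqrt (by norm_num : (0:ℝ) ≤ 2), Real.sqrt_nonneg 2]
  have hsum : Summable (fun n => Real.sqrt ((w+2)/w) * (Real.sqrt 2 / 2) ^ n
      + (2 * w / ε) * (1/2:ℝ)^(n+1)) := by
    apply Summable.add
    · exact (summable_geometric_of_lt_one (by positivity) (by linarith)).mul_left _
    · have : Summable (fun n : ℕ => (1/2:ℝ)^(n+1)) := by
        have := (summable_geometric_of_lt_one (by norm_num : (0:ℝ) ≤ 1/2)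
          (by norm_num)).mul_left (1/2 : ℝ)
        refine this.congr (fun n => ?_)
        ring
      exact this.mul_left _
  apply Summable.of_nonneg_of_le (fun n => by positivity) _ hsum
  intro n
  have hxw : 0 < x n / w := div_pos (hx n) hw
  have habs : |Real.log (x n / w)| ≤ 2 * Real.sqrt (x n / w) + 2 / (x n / w) :=
    stp_abs_log_le hxw
  have hsq : Real.sqrt (x n / w) ≤ Real.sqrt ((w+2)/w) * (Real.sqrt 2)^n := by
    rw [← stp_sqrt_two_pow, ← Real.sqrt_mul (by positivity)]
    apply Real.sqrt_le_sqrt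
    rw [div_mul_eq_mul_div]
    exact div_le_div_of_nonneg_right (h2 n) hw.le
  have hinv : 2 / (x n / w) ≤ 2 * w / ε := by
    rw [div_div_eq_mul_div]
    apply div_le_div_of_nonneg_left (by positivity) hε (h1 n)
  have hpow : (0:ℝ) < (1/2:ℝ)^(n+1) := by positivity
  have hb : (1/2:ℝ)^(n+1) * |Real.log (x n / w)|
      ≤ (1/2:ℝ)^(n+1) * (2 * (Real.sqrt ((w+2)/w) * (Real.sqrt 2)^n) + 2 * w / ε) := by
    apply mul_le_mul_of_nonneg_left _ hpow.le
    calc |Real.log (x n / w)| ≤ 2 * Real.sqrt (x n / w) + 2 / (x n / w) := habs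
      _ ≤ 2 * (Real.sqrt ((w+2)/w) * (Real.sqrt 2)^n) + 2 * w / ε := by
          have := mul_le_mul_of_nonneg_left hsq (by norm_num : (0:ℝ) ≤ 2)
          linarith
  refine hb.trans (le_of_eq ?_)
  have : (1/2:ℝ)^(n+1) * (2 * ((Real.sqrt 2)^n)) = (Real.sqrt 2 / 2)^n := by
    rw [pow_succ, div_pow, div_pow]
    ring
  field_simp
  ring

/-- Summability of the absolute series for fixed `c`. -/
lemma stp_summable_abs (w : ℝ) (hw : 0 < w) {c : ℝ} (h0 : 0 ≤ c) (h1 : c < w + 1) :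
    Summable (fun n => (1/2:ℝ)^(n+1) * |Real.log ((w - c + 2^n) / w)|) := by
  apply stp_summable_master w hw (ε := w + 1 - c) (by linarith)
  · intro n
    have : (1:ℝ) ≤ 2^n := one_le_pow₀ (by norm_num)
    linarith
  · intro n
    have h2 : (1:ℝ) ≤ 2^n := one_le_pow₀ (by norm_num)
    nlinarith

lemma stp_summable (w : ℝ) (hw : 0 < w) {c : ℝ} (h0 : 0 ≤ c) (h1 : c < w + 1) :
    Summable (fun n => (1/2:ℝ)^(n+1) * Real.log ((w - c + 2^n) / w)) := by
  apply Summable.of_abs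
  have := stp_summable_abs w hw h0 h1
  refine this.congr (fun n => ?_)
  rw [abs_mul, abs_of_pos (by positivity : (0:ℝ) < (1/2:ℝ)^(n+1))]

/-- Positivity of the arguments. -/
lemma stp_arg_pos (w : ℝ) {c : ℝ} (h1 : c < w + 1) (n : ℕ) :
    0 < w - c + 2 ^ n := by
  have : (1:ℝ) ≤ 2^n := one_le_pow₀ (by norm_num)
  linarith

/-- Continuity at every point `0 < c₀ < w + 1`. -/
lemma stp_continuousAt (w : ℝ) (hw : 0 < w) {c0 : ℝ} (h0 : 0 < c0) (h1 : c0 < w + 1) :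
    ContinuousAt (fun c => ∑' n : ℕ, (1/2 : ℝ)^(n+1) * Real.log ((w - c + 2^n) / w)) c0 := by
  set a := c0 / 2 with ha
  set b := (c0 + w + 1) / 2 with hb
  have hac : a < c0 := by rw [ha]; linarith
  have hcb : c0 < b := by rw [hb]; linarith
  have hbw : b < w + 1 := by rw [hb]; linarith
  have ha0 : 0 ≤ a := by rw [ha]; linarith
  have hab : a < b := hac.trans hcb
  -- the uniform bound
  set u := fun n : ℕ => (1/2:ℝ)^(n+1) * |Real.log ((w - b + 2^n) / w)|
    + (1/2:ℝ)^(n+1) * |Real.log ((w - a + 2^n) / w)| with hu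
  have hsu : Summable u :=
    (stp_summable_abs w hw (by linarith : (0:ℝ) ≤ b) hbw).add
      (stp_summable_abs w hw ha0 (by linarith))
  have hbound : ∀ n : ℕ, ∀ x ∈ Set.Icc a b,
      ‖(1/2 : ℝ)^(n+1) * Real.log ((w - x + 2^n) / w)‖ ≤ u n := by
    intro n x hx
    have hxb : x ≤ b := hx.2
    have hax : a ≤ x := hx.1
    have hposb : 0 < w - b + 2^n := stp_arg_pos w hbw n
    have hposx : 0 < w - x + 2^n := by linarith
    have hposa : 0 < w - a + 2^n := by linarith
    have hlo : Real.log ((w - b + 2^n) / w) ≤ Real.log ((w - x + 2^n) / w) :=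
      Real.log_le_log (by positivity) (by apply div_le_div_of_nonneg_right _ hw.le; linarith)
    have hhi : Real.log ((w - x + 2^n) / w) ≤ Real.log ((w - a + 2^n) / w) :=
      Real.log_le_log (by positivity) (by apply div_le_div_of_nonneg_right _ hw.le; linarith)
    have habs : |Real.log ((w - x + 2^n) / w)|
        ≤ |Real.log ((w - b + 2^n) / w)| + |Real.log ((w - a + 2^n) / w)| := by
      rw [abs_le]
      constructor
      · have := neg_abs_le (Real.log ((w - b + 2^n) / w))
        have h2 := abs_nonneg (Real.log ((w - a + 2^n) / w))
        linarith
      · have := le_abs_self (Real.log ((w - a + 2^n) / w))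
        have h2 := abs_nonneg (Real.log ((w - b + 2^n) / w))
        linarith
    rw [norm_mul, norm_pow]
    have : ‖(1/2 : ℝ)‖ = (1/2 : ℝ) := by rw [Real.norm_eq_abs]; norm_num
    rw [this, Real.norm_eq_abs, hu]
    have hpow : (0:ℝ) ≤ (1/2:ℝ)^(n+1) := by positivity
    nlinarith [abs_nonneg (Real.log ((w - x + 2^n) / w))]
  have hunif := tendstoUniformlyOn_tsum hsu hbound
  have hcont : ContinuousOn
      (fun c => ∑' n : ℕ, (1/2 : ℝ)^(n+1) * Real.log ((w - c + 2^n) / w)) (Set.Icc a b) := by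
    apply hunif.continuousOn
    refine Filter.Frequently.of_forall fun t => ?_
    apply continuousOn_finset_sum
    intro n _
    apply ContinuousOn.mul continuousOn_const
    apply ContinuousOn.log
    · exact (continuousOn_const.sub continuousOn_id |>.add continuousOn_const).div_const w
    · intro x hx
      have hposb : 0 < w - b + 2^n := stp_arg_pos w hbw n
      have : 0 < w - x + 2^n := by have := hx.2; linarith
      positivity
  exact hcont.continuousAt (Icc_mem_nhds hac hcb)

end StPetersburgAux

/-- Fix w > 0 and let g(c) = ∑ (1/2)^n ln((w - c + 2^(n-1))/w) for c ∈ (1, w+1).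
Then g is continuous and strictly decreasing on (1, w+1), positive near 1,
tends to -∞ as c → (w+1)⁻, and has a unique zero c* ∈ (1, w+1). -/
theorem st_petersburg_break_even_price (w : ℝ) (hw : 0 < w)
    (g : ℝ → ℝ)
    (hg : g = fun c => ∑' n : ℕ, (1/2 : ℝ)^(n+1) * Real.log ((w - c + 2^n) / w)) :
    ContinuousOn g (Set.Ioo 1 (w + 1)) ∧
    StrictAntiOn g (Set.Ioo 1 (w + 1)) ∧
    (∀ᶠ c in nhdsWithin 1 (Set.Ioi 1), 0 < g c) ∧
    Tendsto g (nhdsWithin (w + 1) (Set.Iio (w + 1))) atBot ∧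
    (∃! c : ℝ, c ∈ Set.Ioo 1 (w + 1) ∧ g c = 0) := by
  subst hg
  set G := fun c => ∑' n : ℕ, (1/2 : ℝ)^(n+1) * Real.log ((w - c + 2^n) / w) with hG
  -- continuity
  have hcont : ContinuousOn G (Set.Ioo 1 (w + 1)) := by
    intro c hc
    exact (stp_continuousAt w hw (by linarith [hc.1]) hc.2).continuousWithinAt
  -- strict antitonicity
  have hanti : StrictAntiOn G (Set.Ioo 1 (w + 1)) := by
    intro c1 hc1 c2 hc2 hlt
    have hs1 : Summable (fun n => (1/2:ℝ)^(n+1) * Real.log ((w - c1 + 2^n) / w)) :=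
      stp_summable w hw (by linarith [hc1.1]) hc1.2
    have hs2 : Summable (fun n => (1/2:ℝ)^(n+1) * Real.log ((w - c2 + 2^n) / w)) :=
      stp_summable w hw (by linarith [hc2.1]) hc2.2
    have hle : ∀ n : ℕ, (1/2:ℝ)^(n+1) * Real.log ((w - c2 + 2^n) / w)
        ≤ (1/2:ℝ)^(n+1) * Real.log ((w - c1 + 2^n) / w) := by
      intro n
      apply mul_le_mul_of_nonneg_left _ (by positivity : (0:ℝ) ≤ (1/2:ℝ)^(n+1))
      apply Real.log_le_log
      · have := stp_arg_pos w hc2.2 n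
        positivity
      · apply div_le_div_of_nonneg_right _ hw.le
        linarith
    have hlt0 : (1/2:ℝ)^(0+1) * Real.log ((w - c2 + 2^(0:ℕ)) / w)
        < (1/2:ℝ)^(0+1) * Real.log ((w - c1 + 2^(0:ℕ)) / w) := by
      apply mul_lt_mul_of_pos_left _ (by positivity : (0:ℝ) < (1/2:ℝ)^(0+1))
      apply Real.log_lt_log
      · have := stp_arg_pos w hc2.2 0
        positivity
      · rw [div_lt_div_iff₀ hw hw]
        nlinarith
    exact Summable.tsum_lt_tsum hle hlt0 hs2 hs1
  -- positivity near 1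
  have hG1 : 0 < G 1 := by
    apply Summable.tsum_pos (stp_summable w hw (by norm_num) (by linarith)) _ 1
    · apply mul_pos (by positivity)
      apply Real.log_pos
      rw [lt_div_iff₀ hw]
      norm_num
      linarith
    · intro n
      apply mul_nonneg (by positivity)
      apply Real.log_nonneg
      rw [le_div_iff₀ hw]
      have : (1:ℝ) ≤ 2^n := one_le_pow₀ (by norm_num)
      linarith
  have hpos : ∀ᶠ c in nhdsWithin 1 (Set.Ioi 1), 0 < G c := by
    have hca : ContinuousAt G 1 := stp_continuousAt w hw one_pos (by linarith)
    have := hca.eventually (p := fun y => 0 < y) (eventually_gt_nhds hG1)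
    exact this.filter_mono nhdsWithin_le_nhds
  -- tendsto atBot
  have hbot : Tendsto G (nhdsWithin (w + 1) (Set.Iio (w + 1))) atBot := by
    -- the constant majorant for the tail
    set B := ∑' n : ℕ, (1/2:ℝ)^(n+2) * Real.log ((w + 2^(n+1)) / w) with hB
    have hBs : Summable (fun n : ℕ => (1/2:ℝ)^(n+2) * Real.log ((w + 2^(n+1)) / w)) := by
      have hk1 : ∀ n : ℕ, w + 2 ≤ w + 2^(n+1) := by
        intro n
        have : (2:ℝ) ≤ 2^(n+1) := by
          calc (2:ℝ) = 2^1 := by norm_num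
          _ ≤ 2^(n+1) := by
            apply pow_le_pow_right₀ (by norm_num)
            omega
        linarith
      have hk2 : ∀ n : ℕ, w + 2^(n+1) ≤ (w + 2) * 2^n := by
        intro n
        have h2 : (1:ℝ) ≤ 2^n := one_le_pow₀ (by norm_num)
        have h3 : ((2:ℝ))^(n+1) = 2 * 2^n := by rw [pow_succ]; ring
        nlinarith
      have hm := stp_summable_master w hw (ε := w + 2) (by linarith)
        (fun n => w + 2^(n+1)) hk1 hk2
      have := hm.mul_left (1/2 : ℝ)
      apply Summable.of_abs
      refine this.congr (fun n => ?_)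
      rw [abs_mul, abs_of_pos (by positivity : (0:ℝ) < (1/2:ℝ)^(n+2))]
      rw [pow_succ]
      ring
    have hGle : ∀ c ∈ Set.Ioo 1 (w + 1),
        G c ≤ (1/2) * Real.log ((w - c + 1) / w) + B := by
      intro c hc
      have hsum := stp_summable w hw (by linarith [hc.1] : (0:ℝ) ≤ c) hc.2
      have hsplit := Summable.tsum_eq_zero_add hsum
      have htail : Summable (fun n : ℕ =>
          (1/2:ℝ)^(n+1+1) * Real.log ((w - c + 2^(n+1)) / w)) :=
        (summable_nat_add_iff 1).2 hsum
      have htle : (∑' n : ℕ, (1/2:ℝ)^(n+1+1) * Real.log ((w - c + 2^(n+1)) / w)) ≤ B := by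
        rw [hB]
        apply Summable.tsum_le_tsum _ htail hBs
        intro n
        have hpos : 0 < w - c + 2^(n+1) := stp_arg_pos w hc.2 (n+1)
        have h1 : (1/2:ℝ)^(n+1+1) = (1/2:ℝ)^(n+2) := by ring
        rw [h1]
        apply mul_le_mul_of_nonneg_left _ (by positivity : (0:ℝ) ≤ (1/2:ℝ)^(n+2))
        apply Real.log_le_log (by positivity)
        apply div_le_div_of_nonneg_right _ hw.le
        linarith [hc.1]
      have h0 : (1/2:ℝ)^(0+1) * Real.log ((w - c + 2^(0:ℕ)) / w)
          = (1/2) * Real.log ((w - c + 1) / w) := by norm_num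
      rw [hG]
      simp only []
      rw [hsplit, h0]
      linarith
    -- the majorant tends to -infty
    have harg : Tendsto (fun c => (w - c + 1) / w)
        (nhdsWithin (w + 1) (Set.Iio (w + 1))) (nhdsWithin 0 (Set.Ioi 0)) := by
      apply tendsto_nhdsWithin_of_tendsto_nhds_of_eventually_within
      · have hc : Continuous (fun c : ℝ => (w - c + 1) / w) := by continuity
        have := hc.tendsto (w + 1)
        simp only [show (w - (w + 1) + 1) / w = 0 by ring] at this
        exact this.mono_left nhdsWithin_le_nhds
      · filter_upwards [self_mem_nhdsWithin] with c hc
        have hcw : c < w + 1 := hc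
        have : 0 < w - c + 1 := by linarith
        exact Set.mem_Ioi.2 (by positivity)
    have hlog : Tendsto (fun c => Real.log ((w - c + 1) / w))
        (nhdsWithin (w + 1) (Set.Iio (w + 1))) atBot :=
      Real.tendsto_log_nhdsGT_zero.comp harg
    have hmul : Tendsto (fun c => (1/2) * Real.log ((w - c + 1) / w))
        (nhdsWithin (w + 1) (Set.Iio (w + 1))) atBot :=
      (tendsto_const_mul_atBot_of_pos (by norm_num : (0:ℝ) < 1/2)).2 hlog
    have hF : Tendsto (fun c => (1/2) * Real.log ((w - c + 1) / w) + B)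
        (nhdsWithin (w + 1) (Set.Iio (w + 1))) atBot :=
      tendsto_atBot_add_const_right _ B hmul
    apply tendsto_atBot_mono' _ _ hF
    have hmem : Set.Ioo 1 (w + 1) ∈ nhdsWithin (w + 1) (Set.Iio (w + 1)) :=
      Ioo_mem_nhdsLT_of_mem ⟨by linarith, le_refl _⟩
    filter_upwards [hmem] with c hc
    exact hGle c hc
  refine ⟨hcont, hanti, hpos, hbot, ?_⟩
  -- existence and uniqueness of the zero
  have hmem1 : Set.Ioo 1 (w + 1) ∈ nhdsWithin 1 (Set.Ioi 1) :=
    Ioo_mem_nhdsGT_of_mem ⟨le_refl _, by linarith⟩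
  have hev1 : ∀ᶠ c in nhdsWithin 1 (Set.Ioi 1), 0 < G c ∧ c ∈ Set.Ioo 1 (w + 1) :=
    hpos.and hmem1
  obtain ⟨c1, hc1pos, hc1mem⟩ := hev1.exists
  have hmem2 : Set.Ioo c1 (w + 1) ∈ nhdsWithin (w + 1) (Set.Iio (w + 1)) :=
    Ioo_mem_nhdsLT_of_mem ⟨hc1mem.2, le_refl _⟩
  have hev2 : ∀ᶠ c in nhdsWithin (w + 1) (Set.Iio (w + 1)),
      G c < 0 ∧ c ∈ Set.Ioo c1 (w + 1) :=
    (hbot.eventually (eventually_lt_atBot 0)).and hmem2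
  obtain ⟨c2, hc2neg, hc2mem⟩ := hev2.exists
  have h12 : c1 < c2 := hc2mem.1
  have hsub : Set.Icc c1 c2 ⊆ Set.Ioo 1 (w + 1) := fun x hx =>
    ⟨lt_of_lt_of_le hc1mem.1 hx.1, lt_of_le_of_lt hx.2 hc2mem.2⟩
  have hivt := intermediate_value_Ioo' h12.le (hcont.mono hsub)
  have h0mem : (0:ℝ) ∈ Set.Ioo (G c2) (G c1) := ⟨hc2neg, hc1pos⟩
  obtain ⟨cs, hcsmem, hcs0⟩ := hivt h0mem
  have hcsIoo : cs ∈ Set.Ioo 1 (w + 1) :=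
    ⟨lt_trans hc1mem.1 hcsmem.1, lt_trans hcsmem.2 hc2mem.2⟩
  refine ⟨cs, ⟨hcsIoo, hcs0⟩, ?_⟩
  intro y hy
  exact hanti.injOn hy.1 hcsIoo (by rw [hy.2, hcs0])
end
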